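/- Let P be a monic real polynomial of degree n ≥ 2 with n distinct real roots x_1 < x_2 < … < x_n, and let w_1 < … < w_{n−1} be the roots of P′. Then for every λ ∈ ℝ the polynomial P − λP′ has n distinct real roots, which can be labeled x_1(λ) < … < x_n(λ) such that x_j(λ) < w_j < x_{j+1}(λ) for all 1 ≤ j ≤ n−1. -/

import Mathlib

open Polynomial Finset Filter

private lemma chain_lt' {f : ℕ → ℝ} {n : ℕ} (h : ∀ i, i + 1 < n → f i < f (i + 1)) :
    ∀ i j, i < j → j < n → f i < f j := by
  intro i j hij hjn
  induction j with
  | zero => omega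
  | succ j ih =>
    rcases Nat.lt_or_ge i j with h' | h'
    · exact (ih h' (by omega)).trans (h j hjn)
    · have hij' : i = j := by omega
      subst hij'
      exact h i hjn

private lemma prod_neg_pos' {s : Finset ℕ} {f : ℕ → ℝ} (h : ∀ i ∈ s, f i < 0) :
    0 < (-1 : ℝ) ^ s.card * ∏ i ∈ s, f i := by
  have h1 : ∏ i ∈ s, f i = (-1 : ℝ) ^ s.card * ∏ i ∈ s, (-(f i)) := by
    rw [← prod_const (-1 : ℝ), ← prod_mul_distrib]
    simp
  have h2 : 0 < ∏ i ∈ s, (-(f i)) := prod_pos fun i hi => neg_pos.2 (h i hi)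
  rw [h1, ← mul_assoc, ← pow_add]
  have : Even (s.card + s.card) := ⟨s.card, rfl⟩
  rw [this.neg_one_pow, one_mul]
  exact h2

private lemma exists_root_gt' (Q : ℝ[X]) (hQ : Q.Monic) (hdeg : 0 < Q.degree) (a : ℝ)
    (ha : Q.eval a < 0) : ∃ r, a < r ∧ Q.eval r = 0 := by
  have htop : Tendsto (fun t => Q.eval t) atTop atTop :=
    Q.tendsto_atTop_of_leadingCoeff_nonneg hdeg (by rw [hQ.leadingCoeff]; norm_num)
  obtain ⟨b, hb1, hb2⟩ := ((htop.eventually_gt_atTop 0).and (eventually_gt_atTop a)).exists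
  obtain ⟨r, hr, hr0⟩ :=
    intermediate_value_Ioo hb2.le (Q.continuous.continuousOn) (Set.mem_Ioo.2 ⟨ha, hb1⟩)
  exact ⟨r, hr.1, hr0⟩

private lemma exists_root_between' (Q : ℝ[X]) {u v : ℝ} (huv : u < v)
    (h : Q.eval u * Q.eval v < 0) : ∃ r, u < r ∧ r < v ∧ Q.eval r = 0 := by
  rcases mul_neg_iff.1 h with ⟨hu, hv⟩ | ⟨hu, hv⟩
  · obtain ⟨r, hr, h0⟩ :=
      intermediate_value_Ioo' huv.le (Q.continuous.continuousOn) (Set.mem_Ioo.2 ⟨hv, hu⟩)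
    exact ⟨r, hr.1, hr.2, h0⟩
  · obtain ⟨r, hr, h0⟩ :=
      intermediate_value_Ioo huv.le (Q.continuous.continuousOn) (Set.mem_Ioo.2 ⟨hu, hv⟩)
    exact ⟨r, hr.1, hr.2, h0⟩

private lemma exists_root_lt' (Q : ℝ[X]) (hQ : Q.Monic) (hdeg : 0 < Q.natDegree) (a : ℝ)
    (ha : (-1 : ℝ) ^ Q.natDegree * Q.eval a < 0) : ∃ r, r < a ∧ Q.eval r = 0 := by
  set R : ℝ[X] := C ((-1 : ℝ) ^ Q.natDegree) * Q.comp (-X) with hR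
  have hXdeg : (-X : ℝ[X]).natDegree = 1 := by simp
  have hc : (Q.comp (-X)).leadingCoeff = (-1 : ℝ) ^ Q.natDegree := by
    rw [leadingCoeff_comp (by rw [hXdeg]; norm_num)]
    simp [hQ.leadingCoeff, hXdeg]
  have hsq : ((-1 : ℝ) ^ Q.natDegree) * ((-1 : ℝ) ^ Q.natDegree) = 1 := by
    rw [← pow_add]
    exact Even.neg_one_pow ⟨Q.natDegree, rfl⟩
  have hRm : R.Monic := by
    unfold Monic
    rw [hR, leadingCoeff_mul, leadingCoeff_C, hc, hsq]
  have hRdeg : R.natDegree = Q.natDegree := by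
    rw [hR, natDegree_C_mul (by positivity : ((-1:ℝ)^Q.natDegree) ≠ 0), natDegree_comp, hXdeg,
      mul_one]
  have hRdegpos : 0 < R.degree := natDegree_pos_iff_degree_pos.1 (by omega)
  have hReval : ∀ t, R.eval t = (-1 : ℝ) ^ Q.natDegree * Q.eval (-t) := by
    intro t; simp [hR, eval_comp]
  have hRa : R.eval (-a) < 0 := by rw [hReval, neg_neg]; exact ha
  obtain ⟨r, hr, hr0⟩ := exists_root_gt' R hRm hRdegpos (-a) hRa
  refine ⟨-r, by linarith, ?_⟩
  rw [hReval] at hr0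
  rcases mul_eq_zero.1 hr0 with h | h
  · exact absurd h (by positivity)
  · exact h

private lemma monic_eq_prod_of_roots' {Q : ℝ[X]} {n : ℕ} (hQ : Q.Monic) (hdeg : Q.natDegree = n)
    (r : ℕ → ℝ) (hinj : ∀ i j, i < n → j < n → r i = r j → i = j)
    (hroot : ∀ i, i < n → Q.eval (r i) = 0) :
    Q = ∏ i ∈ Finset.range n, (X - C (r i)) := by
  have hQ0 : Q ≠ 0 := hQ.ne_zero
  set s : Multiset ℝ := (Finset.range n).val.map r with hs
  have hnodup : s.Nodup := by
    refine Multiset.Nodup.map_on ?_ (Finset.range n).nodup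
    intro i hi j hj hij
    exact hinj i j (by simpa using hi) (by simpa using hj) hij
  have hle : s ≤ Q.roots := by
    rw [Multiset.le_iff_subset hnodup]
    intro a hamem
    obtain ⟨i, hi, rfl⟩ := Multiset.mem_map.1 hamem
    exact (mem_roots hQ0).2 (hroot i (by simpa using hi))
  have hdvd : (Multiset.map (fun a => X - C a) s).prod ∣ Q :=
    (Multiset.prod_X_sub_C_dvd_iff_le_roots hQ0 s).2 hle
  have hDeq : (Multiset.map (fun a => X - C a) s).prod = ∏ i ∈ Finset.range n, (X - C (r i)) := by
    rw [hs, Multiset.map_map, Finset.prod_eq_multiset_prod]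
    rfl
  rw [hDeq] at hdvd
  have hDmonic : (∏ i ∈ Finset.range n, (X - C (r i))).Monic :=
    monic_prod_of_monic _ _ fun i _ => monic_X_sub_C _
  have hDdeg : (∏ i ∈ Finset.range n, (X - C (r i))).natDegree = n := by
    rw [natDegree_prod _ _ fun i _ => (monic_X_sub_C (r i)).ne_zero]
    simp
  exact (eq_of_dvd_of_natDegree_le_of_leadingCoeff hdvd (by rw [hdeg, hDdeg])
    (by rw [hDmonic.leadingCoeff, hQ.leadingCoeff])).symm

private lemma crit_between' {n : ℕ} (hn : 2 ≤ n) (x w : ℕ → ℝ)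
    (hx : ∀ i, i + 1 < n → x i < x (i + 1))
    (hw : ∀ j, j + 1 < n - 1 → w j < w (j + 1))
    (P : ℝ[X]) (hP : P = ∏ i ∈ Finset.range n, (X - C (x i)))
    (hP' : derivative P = C (n : ℝ) * ∏ j ∈ Finset.range (n - 1), (X - C (w j))) :
    ∀ j, j + 1 < n → x j < w j ∧ w j < x (j + 1) := by
  have hxm := chain_lt' hx
  have hwm := chain_lt' hw
  -- Rolle: each interval (x j, x (j+1)) contains some critical point w k
  have step : ∀ j, j + 1 < n → ∃ k, k < n - 1 ∧ x j < w k ∧ w k < x (j + 1) := by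
    intro j hj
    have hab : x j < x (j + 1) := hx j hj
    have hzero : ∀ i, i < n → (fun t => P.eval t) (x i) = 0 := by
      intro i hi
      simp only [hP, eval_prod]
      exact Finset.prod_eq_zero (Finset.mem_range.2 hi) (by simp)
    obtain ⟨c, hc, hderiv⟩ := exists_hasDerivAt_eq_zero hab P.continuous.continuousOn
      (by simp only at hzero; rw [hzero j (by omega), hzero (j + 1) hj])
      (fun t _ => P.hasDerivAt t)
    rw [hP'] at hderiv
    simp only [eval_mul, eval_C, eval_prod, eval_sub, eval_X] at hderiv
    have hn0 : (n : ℝ) ≠ 0 := by positivity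
    have hprod : ∏ k ∈ Finset.range (n - 1), (c - w k) = 0 := by
      rcases mul_eq_zero.1 hderiv with h | h
      · exact absurd h hn0
      · exact h
    obtain ⟨k, hk, hk0⟩ := Finset.prod_eq_zero_iff.1 hprod
    have hc' : c = w k := by linarith [sub_eq_zero.1 hk0]
    exact ⟨k, Finset.mem_range.1 hk, hc' ▸ hc.1, hc' ▸ hc.2⟩
  set m := n - 1 with hm
  have hm1 : 1 ≤ m := by omega
  have step' : ∀ j : Fin m, ∃ k : Fin m, x j < w k ∧ w k < x (j + 1) := by
    intro j
    obtain ⟨k, hk, h1, h2⟩ := step j (by omega)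
    exact ⟨⟨k, hk⟩, h1, h2⟩
  choose K hK1 hK2 using step'
  have hKmono : StrictMono K := by
    intro j1 j2 hj
    have hx12 : x ((j1 : ℕ) + 1) ≤ x j2 := by
      rcases Nat.lt_or_ge ((j1 : ℕ) + 1) j2 with h | h
      · exact (hxm _ _ h (by omega)).le
      · have : (j1 : ℕ) + 1 = (j2 : ℕ) := by
          have := (Fin.lt_iff_val_lt_val.1 hj); omega
        rw [this]
    have hw12 : w (K j1) < w (K j2) := lt_of_lt_of_le (hK2 j1) (lt_of_le_of_lt hx12 (hK1 j2)).le
    by_contra hcon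
    push_neg at hcon
    rcases Nat.lt_or_ge ((K j2 : ℕ)) (K j1) with h | h
    · exact absurd (hwm _ _ h (by omega)) (by linarith)
    · have : (K j1 : ℕ) = (K j2 : ℕ) := by
        have := Fin.le_iff_val_le_val.1 hcon; omega
      have : w (K j1) = w (K j2) := by rw [this]
      linarith
  have hKid : K = id := by
    have hsurj : Function.Surjective K := Finite.surjective_of_injective hKmono.injective
    have hrange : Set.range K = Set.range (id : Fin m → Fin m) := by
      rw [Set.range_id, Set.range_eq_univ]
      exact hsurj
    have inst : WellFoundedLT (Fin m) := inferInstance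
    exact (@StrictMono.range_inj (Fin m) (Fin m) _ _ inst K id hKmono strictMono_id).1 hrange
  intro j hj
  have hjm : j < m := by omega
  have h1 := hK1 ⟨j, hjm⟩
  have h2 := hK2 ⟨j, hjm⟩
  rw [hKid] at h1 h2
  exact ⟨h1, h2⟩
/-- Interlacing of the zeros of the pencil `P - λP'` with the critical points of a
strictly hyperbolic polynomial `P`. -/
theorem pencil_roots_interlace_critical_points
    (n : ℕ) (hn : 2 ≤ n) (x w : ℕ → ℝ)
    (hx : ∀ i, i + 1 < n → x i < x (i + 1))
    (hw : ∀ j, j + 1 < n - 1 → w j < w (j + 1))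
    (P : Polynomial ℝ)
    (hP : P = ∏ i ∈ Finset.range n, (X - C (x i)))
    (hP' : derivative P = C (n : ℝ) * ∏ j ∈ Finset.range (n - 1), (X - C (w j))) :
    ∀ lam : ℝ, ∃ xl : ℕ → ℝ,
      (∀ i, i + 1 < n → xl i < xl (i + 1)) ∧
      P - C lam * derivative P = ∏ i ∈ Finset.range n, (X - C (xl i)) ∧
      ∀ j, j + 1 < n → xl j < w j ∧ w j < xl (j + 1) := by
  intro lam
  have hxm := chain_lt' hx
  have hwm := chain_lt' hw
  have hcb := crit_between' hn x w hx hw P hP hP'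
  have hPm : P.Monic := hP ▸ monic_prod_of_monic _ _ fun i _ => monic_X_sub_C _
  have hP0 : P ≠ 0 := hPm.ne_zero
  have hPdeg : P.natDegree = n := by
    rw [hP, natDegree_prod _ _ fun i _ => (monic_X_sub_C (x i)).ne_zero]
    simp
  set Q : ℝ[X] := P - C lam * derivative P with hQdef
  have hdlt : (C lam * derivative P).degree < P.degree := by
    refine lt_of_le_of_lt ?_ (degree_derivative_lt hP0)
    refine (degree_mul_le _ _).trans ?_
    calc (C lam).degree + (derivative P).degree ≤ 0 + (derivative P).degree :=
          add_le_add degree_C_le le_rfl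
      _ = (derivative P).degree := by rw [zero_add]
  have hQm : Q.Monic := hPm.sub_of_left hdlt
  have hQ0 : Q ≠ 0 := hQm.ne_zero
  have hQdeg : Q.natDegree = n := by
    rw [hQdef, natDegree_eq_of_degree_eq (degree_sub_eq_left_of_degree_lt hdlt), hPdeg]
  have hQdegpos : 0 < Q.degree := natDegree_pos_iff_degree_pos.1 (by omega)
  -- evaluation formulas
  have evalP : ∀ t, P.eval t = ∏ i ∈ Finset.range n, (t - x i) := by
    intro t; rw [hP]; simp [eval_prod]
  have evalQw : ∀ j, j + 1 < n → Q.eval (w j) = P.eval (w j) := by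
    intro j hj
    have hz : ∏ k ∈ Finset.range (n - 1), (w j - w k) = 0 :=
      Finset.prod_eq_zero (i := j) (Finset.mem_range.2 (by omega)) (by simp)
    simp [hQdef, hP', eval_prod, hz]
  -- sign of Q at the critical points
  have signQ : ∀ j, j + 1 < n → 0 < (-1 : ℝ) ^ (n - 1 - j) * Q.eval (w j) := by
    intro j hj
    rw [evalQw j hj]
    have hsplit : P.eval (w j) =
        (∏ i ∈ Finset.range (j + 1), (w j - x i)) * ∏ i ∈ Finset.Ico (j + 1) n, (w j - x i) := by
      rw [evalP, ← Finset.prod_range_mul_prod_Ico _ (by omega : j + 1 ≤ n)]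
    have hA : 0 < ∏ i ∈ Finset.range (j + 1), (w j - x i) := by
      refine Finset.prod_pos fun i hi => sub_pos.2 ?_
      have hij : i ≤ j := by simpa [Nat.lt_succ_iff] using hi
      rcases hij.lt_or_eq with h | h
      · exact (hxm i j h (by omega)).trans (hcb j hj).1
      · rw [h]; exact (hcb j hj).1
    have hB : 0 < (-1 : ℝ) ^ (Finset.Ico (j + 1) n).card * ∏ i ∈ Finset.Ico (j + 1) n, (w j - x i) := by
      refine prod_neg_pos' fun i hi => sub_neg.2 ?_
      obtain ⟨h1, h2⟩ := Finset.mem_Ico.1 hi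
      rcases h1.lt_or_eq with h | h
      · exact (hcb j hj).2.trans (hxm (j + 1) i h h2)
      · rw [← h]; exact (hcb j hj).2
    rw [Nat.card_Ico, (by omega : n - (j + 1) = n - 1 - j)] at hB
    rw [hsplit, mul_left_comm]
    exact mul_pos hA hB
  -- bottom root
  obtain ⟨r0, hr0w, hr0z⟩ : ∃ r, r < w 0 ∧ Q.eval r = 0 := by
    refine exists_root_lt' Q hQm (by omega) (w 0) ?_
    have h0 := signQ 0 (by omega)
    rw [hQdeg, (by omega : n = (n - 1 - 0) + 1), pow_succ]
    simp only [Nat.sub_zero] at h0 ⊢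
    nlinarith
  -- top root
  obtain ⟨rt, hrtw, hrtz⟩ : ∃ r, w (n - 2) < r ∧ Q.eval r = 0 := by
    refine exists_root_gt' Q hQm hQdegpos (w (n - 2)) ?_
    have h0 := signQ (n - 2) (by omega)
    rw [(by omega : n - 1 - (n - 2) = 1), pow_one] at h0
    linarith
  -- middle roots
  have hmid : ∀ j, j + 1 < n - 1 → ∃ r, w j < r ∧ r < w (j + 1) ∧ Q.eval r = 0 := by
    intro j hj
    have h1 := signQ j (by omega)
    have h2 := signQ (j + 1) (by omega)
    set e := n - 1 - (j + 1) with he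
    rw [(by omega : n - 1 - j = e + 1), pow_succ] at h1
    have hsq : ((-1 : ℝ) ^ e) * ((-1 : ℝ) ^ e) = 1 := by
      rw [← pow_add]; exact Even.neg_one_pow ⟨e, rfl⟩
    have h1' : (-1 : ℝ) ^ e * Q.eval (w j) < 0 := by
      have hr : (-1 : ℝ) ^ e * -1 * Q.eval (w j) = -((-1 : ℝ) ^ e * Q.eval (w j)) := by ring
      rw [hr] at h1
      linarith
    refine exists_root_between' Q (hw j hj) ?_
    have hkey : Q.eval (w j) * Q.eval (w (j + 1)) =
        ((-1 : ℝ) ^ e * Q.eval (w j)) * ((-1 : ℝ) ^ e * Q.eval (w (j + 1))) := by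
      rw [mul_mul_mul_comm, hsq, one_mul]
    rw [hkey]
    exact mul_neg_of_neg_of_pos h1' h2
  choose! rm hm1 hm2 hm3 using hmid
  -- assemble the root labeling
  set xl : ℕ → ℝ := fun j => if j = 0 then r0 else if j < n - 1 then rm (j - 1) else rt with hxl
  have hxl0 : xl 0 = r0 := by simp [hxl]
  have hxlm : ∀ j, 1 ≤ j → j < n - 1 → xl j = rm (j - 1) := by
    intro j h1 h2
    simp only [hxl]
    rw [if_neg (by omega), if_pos h2]
  have hxlt : ∀ j, 1 ≤ j → n - 1 ≤ j → xl j = rt := by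
    intro j h1 h2
    simp only [hxl]
    rw [if_neg (by omega), if_neg (by omega)]
  have hA : ∀ j, j < n - 1 → xl j < w j := by
    intro j hj
    rcases Nat.eq_zero_or_pos j with h0 | h0
    · subst h0; rw [hxl0]; exact hr0w
    · rw [hxlm j h0 hj]
      have := hm2 (j - 1) (by omega)
      rwa [(by omega : j - 1 + 1 = j)] at this
  have hB : ∀ j, 1 ≤ j → j ≤ n - 1 → w (j - 1) < xl j := by
    intro j h1 h2
    rcases Nat.lt_or_ge j (n - 1) with h | h
    · rw [hxlm j h1 h]
      exact hm1 (j - 1) (by omega)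
    · have hj : j = n - 1 := by omega
      rw [hxlt j h1 h, hj, (by omega : n - 1 - 1 = n - 2)]
      exact hrtw
  have hC : ∀ j, j < n → Q.eval (xl j) = 0 := by
    intro j hj
    rcases Nat.eq_zero_or_pos j with h0 | h0
    · subst h0; rw [hxl0]; exact hr0z
    rcases Nat.lt_or_ge j (n - 1) with h | h
    · rw [hxlm j h0 h]
      exact hm3 (j - 1) (by omega)
    · rw [hxlt j h0 h]; exact hrtz
  have hinc : ∀ i, i + 1 < n → xl i < xl (i + 1) := by
    intro i hi
    exact (hA i (by omega)).trans (by simpa using hB (i + 1) (by omega) (by omega))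
  refine ⟨xl, hinc, ?_, ?_⟩
  · refine monic_eq_prod_of_roots' hQm hQdeg xl ?_ hC
    intro i j hi hj hij
    by_contra hne
    rcases Nat.lt_or_ge i j with h | h
    · exact absurd hij (ne_of_lt (chain_lt' hinc i j h hj))
    · exact absurd hij.symm (ne_of_lt (chain_lt' hinc j i (by omega) hi))
  · intro j hj
    exact ⟨hA j (by omega), by simpa using hB (j + 1) (by omega) (by omega)⟩
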